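/- Let (X, ξ) be a pointed metric space that is proper (closed bounded sets are compact) and geodesic. Then there is a bijection between Ends(X), the set of ends of X, and σ(X,ξ), the set of σ-equivalence classes of coarse sequences in (X, ξ). -/

import Mathlib

open Filter

/-- A coarse sequence in a pointed metric space `(X, ξ)`: a sequence with uniformly
bounded consecutive steps that diverges from `ξ` to infinity. -/
def IsCoarseSeqM {X : Type*} [PseudoMetricSpace X] (ξ : X) (s : ℕ → X) : Prop :=
  (∃ K : ℝ, ∀ i : ℕ, dist (s i) (s (i + 1)) ≤ K) ∧
  Tendsto (fun i => dist ξ (s i)) atTop atTop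

/-- `s` is a subsequence of `t`. -/
def IsSubseq {X : Type*} (s t : ℕ → X) : Prop :=
  ∃ k : ℕ → ℕ, StrictMono k ∧ ∀ i, s i = t (k i)

/-- σ-equivalence of coarse sequences: `s` and `t` are connected by a finite chain of
coarse sequences in which each consecutive pair is related by the subsequence relation. -/
def SigmaRelM {X : Type*} [PseudoMetricSpace X] (ξ : X) (s t : ℕ → X) : Prop :=
  ∃ (n : ℕ) (u : ℕ → ℕ → X), u 0 = s ∧ u n = t ∧ (∀ i ≤ n, IsCoarseSeqM ξ (u i)) ∧
    ∀ i < n, IsSubseq (u i) (u (i + 1)) ∨ IsSubseq (u (i + 1)) (u i)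

/-- `x` and `y` are connected inside `A` by a finite chain with steps of length `≤ K`. -/
def ChainM {X : Type*} [PseudoMetricSpace X] (K : ℝ) (A : Set X) (x y : X) : Prop :=
  ∃ (n : ℕ) (c : ℕ → X), c 0 = x ∧ c n = y ∧ (∀ i ≤ n, c i ∈ A) ∧
    ∀ i < n, dist (c i) (c (i + 1)) ≤ K

/-- ε-equivalence: there is `K > 0` such that for every `r > 0` there is `N` with the
tails `{s i : i ≥ N}` and `{t i : i ≥ N}` lying in the same `K`-connected component of
`X \ {x : dist ξ x ≤ r}`. -/
def EpsRelM {X : Type*} [PseudoMetricSpace X] (ξ : X) (s t : ℕ → X) : Prop :=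
  ∃ K > (0 : ℝ), ∀ r > (0 : ℝ), ∃ N : ℕ,
    ∀ x ∈ (s '' {i | N ≤ i}) ∪ (t '' {i | N ≤ i}),
    ∀ y ∈ (s '' {i | N ≤ i}) ∪ (t '' {i | N ≤ i}),
      ChainM K {z | r < dist ξ z} x y

/-- The set of coarse sequences in the pointed metric space `(X, ξ)`. -/
def CoarseSeqM {X : Type*} [PseudoMetricSpace X] (ξ : X) :=
  {s : ℕ → X // IsCoarseSeqM ξ s}

/-- `σ(X, ξ)`: the quotient of the set of coarse sequences by σ-equivalence. -/
def SigmaQuotM {X : Type*} [PseudoMetricSpace X] (ξ : X) :=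
  Quot (fun s t : CoarseSeqM ξ => SigmaRelM ξ s.1 t.1)

/-- `ε(X, ξ)`: the quotient of the set of coarse sequences by ε-equivalence. -/
def EpsQuotM {X : Type*} [PseudoMetricSpace X] (ξ : X) :=
  Quot (fun s t : CoarseSeqM ξ => EpsRelM ξ s.1 t.1)

open NNReal Topology

/-- A ray in a topological space: a proper continuous map `[0,∞) → X`. -/
def IsRay {X : Type*} [TopologicalSpace X] (r : ℝ≥0 → X) : Prop :=
  Continuous r ∧ ∀ K : Set X, IsCompact K → IsCompact (r ⁻¹' K)

/-- Two rays converge to the same end if for every compact `K ⊆ X` there is `N`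
such that `r₀([N,∞))` and `r₁([N,∞))` lie in the same path-connected component
of `X \ K`. -/
def SameEnd {X : Type*} [TopologicalSpace X] (r₀ r₁ : ℝ≥0 → X) : Prop :=
  ∀ K : Set X, IsCompact K → ∃ N : ℕ,
    ∀ x ∈ (r₀ '' {t : ℝ≥0 | (N : ℝ≥0) ≤ t}) ∪ (r₁ '' {t : ℝ≥0 | (N : ℝ≥0) ≤ t}),
    ∀ y ∈ (r₀ '' {t : ℝ≥0 | (N : ℝ≥0) ≤ t}) ∪ (r₁ '' {t : ℝ≥0 | (N : ℝ≥0) ≤ t}),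
      JoinedIn Kᶜ x y

/-- `Ends X`: the set of ends of `X`, i.e. rays modulo converging to the same end. -/
def Ends (X : Type*) [TopologicalSpace X] :=
  Quot (fun r₀ r₁ : {r : ℝ≥0 → X // IsRay r} => SameEnd r₀.1 r₁.1)

/-- A metric space is geodesic if any two points are joined by an isometric
embedding of the interval `[0, dist x y]`. -/
def IsGeodesicSpace (X : Type*) [MetricSpace X] : Prop :=
  ∀ x y : X, ∃ γ : ℝ → X, γ 0 = x ∧ γ (dist x y) = y ∧
    ∀ u ∈ Set.Icc 0 (dist x y), ∀ v ∈ Set.Icc 0 (dist x y),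
      dist (γ u) (γ v) = |u - v|

section Aux
open Set Metric

variable {X : Type*} [MetricSpace X]

/-! ### Geodesics -/

noncomputable def geoFn (hgeo : IsGeodesicSpace X) (x y : X) : ℝ → X :=
  (hgeo x y).choose

lemma geoFn_zero (hgeo : IsGeodesicSpace X) (x y : X) : geoFn hgeo x y 0 = x :=
  (hgeo x y).choose_spec.1

lemma geoFn_dist (hgeo : IsGeodesicSpace X) (x y : X) : geoFn hgeo x y (dist x y) = y :=
  (hgeo x y).choose_spec.2.1

lemma geoFn_isom (hgeo : IsGeodesicSpace X) (x y : X) :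
    ∀ u ∈ Set.Icc 0 (dist x y), ∀ v ∈ Set.Icc 0 (dist x y),
      dist (geoFn hgeo x y u) (geoFn hgeo x y v) = |u - v| :=
  (hgeo x y).choose_spec.2.2

/-! ### The ray associated to a coarse sequence -/

noncomputable def rayAux (hgeo : IsGeodesicSpace X) (s : ℕ → X) (t : ℝ) : X :=
  geoFn hgeo (s ⌊t⌋₊) (s (⌊t⌋₊ + 1)) ((t - ⌊t⌋₊) * dist (s ⌊t⌋₊) (s (⌊t⌋₊ + 1)))

lemma rayAux_nat (hgeo : IsGeodesicSpace X) (s : ℕ → X) (n : ℕ) :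
    rayAux hgeo s (n : ℝ) = s n := by
  unfold rayAux
  rw [Nat.floor_natCast]
  simp [geoFn_zero]

lemma rayAux_eqOn (hgeo : IsGeodesicSpace X) (s : ℕ → X) (n : ℕ) {t : ℝ}
    (h1 : (n : ℝ) ≤ t) (h2 : t ≤ n + 1) :
    rayAux hgeo s t = geoFn hgeo (s n) (s (n + 1)) ((t - n) * dist (s n) (s (n + 1))) := by
  rcases lt_or_eq_of_le h2 with h2 | h2
  · have hfl : ⌊t⌋₊ = n := by
      rw [Nat.floor_eq_iff (le_trans (Nat.cast_nonneg n) h1)]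
      exact ⟨h1, by exact_mod_cast h2⟩
    unfold rayAux; rw [hfl]
  · subst h2
    have : rayAux hgeo s ((n : ℝ) + 1) = s (n + 1) := by
      have := rayAux_nat hgeo s (n + 1); rw [Nat.cast_add, Nat.cast_one] at this
      exact this
    rw [this]
    have : ((n : ℝ) + 1 - n) * dist (s n) (s (n + 1)) = dist (s n) (s (n + 1)) := by ring
    rw [this, geoFn_dist]

lemma rayAux_dist_le (hgeo : IsGeodesicSpace X) {s : ℕ → X} {K : ℝ}
    (hK : ∀ i, dist (s i) (s (i + 1)) ≤ K) (n : ℕ) {u v : ℝ}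
    (h0 : (n : ℝ) ≤ u) (huv : u ≤ v) (h1 : v ≤ n + 1) :
    dist (rayAux hgeo s u) (rayAux hgeo s v) ≤ K * (v - u) := by
  set d := dist (s n) (s (n + 1)) with hd
  have hd0 : 0 ≤ d := dist_nonneg
  have hdK : d ≤ K := hK n
  rw [rayAux_eqOn hgeo s n h0 (le_trans huv h1), rayAux_eqOn hgeo s n (le_trans h0 huv) h1]
  have hu1 : u - n ≤ 1 := by linarith
  have hv1 : v - n ≤ 1 := by linarith
  have hu0 : 0 ≤ u - n := by linarith
  have hv0 : 0 ≤ v - n := by linarith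
  have hmemu : (u - n) * d ∈ Set.Icc 0 d :=
    ⟨mul_nonneg hu0 hd0, by nlinarith⟩
  have hmemv : (v - n) * d ∈ Set.Icc 0 d :=
    ⟨mul_nonneg hv0 hd0, by nlinarith⟩
  rw [geoFn_isom hgeo _ _ _ hmemu _ hmemv]
  have : |(u - n) * d - (v - n) * d| = (v - u) * d := by
    rw [abs_of_nonpos (by nlinarith)]; ring
  rw [this]
  nlinarith

lemma rayAux_lip_aux (hgeo : IsGeodesicSpace X) {s : ℕ → X} {K : ℝ}
    (hK : ∀ i, dist (s i) (s (i + 1)) ≤ K) :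
    ∀ k : ℕ, ∀ u v : ℝ, 0 ≤ u → u ≤ v → v ≤ ⌊u⌋₊ + 1 + k →
      dist (rayAux hgeo s u) (rayAux hgeo s v) ≤ K * (v - u) := by
  intro k
  induction k with
  | zero =>
    intro u v hu huv hv
    exact rayAux_dist_le hgeo hK ⌊u⌋₊ (Nat.floor_le hu) huv (by push_cast at hv ⊢; linarith)
  | succ k ih =>
    intro u v hu huv hv
    by_cases hcase : v ≤ (⌊u⌋₊ : ℝ) + 1
    · exact rayAux_dist_le hgeo hK ⌊u⌋₊ (Nat.floor_le hu) huv hcase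
    · push_neg at hcase
      set m : ℝ := ((⌊u⌋₊ + 1 : ℕ) : ℝ) with hm
      have hum : u ≤ m := by
        have := Nat.lt_floor_add_one u
        push_cast [hm]; linarith
      have hmv : m ≤ v := by push_cast [hm]; linarith
      have hm0 : (0:ℝ) ≤ m := by positivity
      have h1 : dist (rayAux hgeo s u) (rayAux hgeo s m) ≤ K * (m - u) :=
        rayAux_dist_le hgeo hK ⌊u⌋₊ (Nat.floor_le hu) hum (by push_cast [hm]; linarith)
      have hflm : ⌊m⌋₊ = ⌊u⌋₊ + 1 := by rw [hm, Nat.floor_natCast]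
      have h2 : dist (rayAux hgeo s m) (rayAux hgeo s v) ≤ K * (v - m) := by
        apply ih m v hm0 hmv
        rw [hflm]; push_cast at hv ⊢; linarith
      calc dist (rayAux hgeo s u) (rayAux hgeo s v)
          ≤ dist (rayAux hgeo s u) (rayAux hgeo s m) + dist (rayAux hgeo s m) (rayAux hgeo s v) :=
            dist_triangle _ _ _
        _ ≤ K * (m - u) + K * (v - m) := add_le_add h1 h2
        _ = K * (v - u) := by ring

lemma rayAux_lip (hgeo : IsGeodesicSpace X) {s : ℕ → X} {K : ℝ}
    (hK : ∀ i, dist (s i) (s (i + 1)) ≤ K) {u v : ℝ} (hu : 0 ≤ u) (huv : u ≤ v) :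
    dist (rayAux hgeo s u) (rayAux hgeo s v) ≤ K * (v - u) := by
  apply rayAux_lip_aux hgeo hK ⌈v⌉₊ u v hu huv
  have h := Nat.le_ceil v
  have h2 : (0:ℝ) ≤ ⌊u⌋₊ := Nat.cast_nonneg _
  linarith

/-! ### rayOf : the ray of a coarse sequence -/

noncomputable def rayOf (hgeo : IsGeodesicSpace X) (s : ℕ → X) : ℝ≥0 → X :=
  fun t => rayAux hgeo s (t : ℝ)

lemma rayOf_nat (hgeo : IsGeodesicSpace X) (s : ℕ → X) (n : ℕ) :
    rayOf hgeo s (n : ℝ≥0) = s n := by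
  unfold rayOf
  rw [show (((n : ℝ≥0)) : ℝ) = (n : ℝ) by simp, rayAux_nat]

lemma rayOf_continuous (hgeo : IsGeodesicSpace X) {s : ℕ → X} {K : ℝ}
    (hK : ∀ i, dist (s i) (s (i + 1)) ≤ K) : Continuous (rayOf hgeo s) := by
  have hK0 : 0 ≤ K := le_trans dist_nonneg (hK 0)
  apply LipschitzWith.continuous (K := Real.toNNReal K)
  apply LipschitzWith.of_dist_le_mul
  intro a b
  rcases le_total a b with hab | hab
  · have h := rayAux_lip hgeo hK (u := (a:ℝ)) (v := (b:ℝ)) a.2 (by exact_mod_cast hab)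
    calc dist (rayOf hgeo s a) (rayOf hgeo s b) ≤ K * ((b:ℝ) - a) := h
      _ ≤ Real.toNNReal K * dist a b := by
          rw [NNReal.dist_eq, Real.coe_toNNReal _ hK0]
          have h2 : (a:ℝ) - b ≤ 0 := sub_nonpos.mpr (by exact_mod_cast hab)
          rw [abs_of_nonpos h2]
          nlinarith
  · rw [dist_comm (rayOf hgeo s a), dist_comm a]
    have h := rayAux_lip hgeo hK (u := (b:ℝ)) (v := (a:ℝ)) b.2 (by exact_mod_cast hab)
    calc dist (rayOf hgeo s b) (rayOf hgeo s a) ≤ K * ((a:ℝ) - b) := h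
      _ ≤ Real.toNNReal K * dist b a := by
          rw [NNReal.dist_eq, Real.coe_toNNReal _ hK0]
          have h2 : (b:ℝ) - a ≤ 0 := sub_nonpos.mpr (by exact_mod_cast hab)
          rw [abs_of_nonpos h2]
          nlinarith

lemma rayOf_dist_floor (hgeo : IsGeodesicSpace X) {s : ℕ → X} {K : ℝ}
    (hK : ∀ i, dist (s i) (s (i + 1)) ≤ K) (t : ℝ≥0) :
    dist (s ⌊(t:ℝ)⌋₊) (rayOf hgeo s t) ≤ K := by
  have hK0 : 0 ≤ K := le_trans dist_nonneg (hK 0)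
  have h1 : (⌊(t:ℝ)⌋₊ : ℝ) ≤ (t:ℝ) := Nat.floor_le t.2
  have h2 : (t:ℝ) ≤ (⌊(t:ℝ)⌋₊ : ℝ) + 1 := le_of_lt (Nat.lt_floor_add_one _)
  have h3 := rayAux_dist_le hgeo hK ⌊(t:ℝ)⌋₊ (le_refl _) h1 h2
  rw [rayAux_nat] at h3
  calc dist (s ⌊(t:ℝ)⌋₊) (rayOf hgeo s t) ≤ K * ((t:ℝ) - ⌊(t:ℝ)⌋₊) := h3
    _ ≤ K := by nlinarith

lemma rayOf_dist_tendsto (hgeo : IsGeodesicSpace X) {ξ : X} {s : ℕ → X}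
    (hs : IsCoarseSeqM ξ s) :
    Filter.Tendsto (fun t => dist ξ (rayOf hgeo s t)) Filter.atTop Filter.atTop := by
  obtain ⟨⟨K, hK⟩, hdiv⟩ := hs
  rw [Filter.tendsto_atTop]
  intro b
  obtain ⟨N, hN⟩ := Filter.eventually_atTop.mp (Filter.tendsto_atTop.mp hdiv (b + K))
  filter_upwards [Filter.eventually_ge_atTop (N : ℝ≥0)] with t ht
  have hfl : N ≤ ⌊(t:ℝ)⌋₊ := Nat.le_floor (by exact_mod_cast ht)
  have h1 := hN _ hfl
  have h2 := rayOf_dist_floor hgeo hK t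
  have h3 := dist_triangle ξ (rayOf hgeo s t) (s ⌊(t:ℝ)⌋₊)
  have h4 : dist (rayOf hgeo s t) (s ⌊(t:ℝ)⌋₊) = dist (s ⌊(t:ℝ)⌋₊) (rayOf hgeo s t) :=
    dist_comm _ _
  linarith

lemma rayOf_isRay (hgeo : IsGeodesicSpace X) {ξ : X} {s : ℕ → X}
    (hs : IsCoarseSeqM ξ s) : IsRay (rayOf hgeo s) := by
  obtain ⟨K, hK⟩ := hs.1
  refine ⟨rayOf_continuous hgeo hK, ?_⟩
  intro C hC
  obtain ⟨R, hR⟩ := hC.isBounded.subset_closedBall ξ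
  have hdiv' := rayOf_dist_tendsto hgeo hs
  obtain ⟨T, hT⟩ := Filter.eventually_atTop.mp (Filter.tendsto_atTop.mp hdiv' (R + 1))
  have hsub : rayOf hgeo s ⁻¹' C ⊆ Set.Icc 0 T := by
    intro t ht
    refine ⟨zero_le, ?_⟩
    by_contra h
    push_neg at h
    have h1 := hT t h.le
    have h2 : rayOf hgeo s t ∈ Metric.closedBall ξ R := hR ht
    rw [Metric.mem_closedBall, dist_comm] at h2
    linarith
  exact IsCompact.of_isClosed_subset isCompact_Icc
    (hC.isClosed.preimage (rayOf_continuous hgeo hK)) hsub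


/-! ### Divergence of rays, for proper X -/

lemma ray_dist_tendsto (hproper : ∀ B : Set X, IsClosed B → Bornology.IsBounded B → IsCompact B)
    (ξ : X) {r : ℝ≥0 → X} (hr : IsRay r) :
    Filter.Tendsto (fun t => dist ξ (r t)) Filter.atTop Filter.atTop := by
  rw [Filter.tendsto_atTop]
  intro b
  have hcpt : IsCompact (Metric.closedBall ξ b) :=
    hproper _ Metric.isClosed_closedBall Metric.isBounded_closedBall
  have hS : IsCompact (r ⁻¹' Metric.closedBall ξ b) := hr.2 _ hcpt
  obtain ⟨T, hT⟩ : BddAbove (r ⁻¹' Metric.closedBall ξ b) := hS.bddAbove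
  filter_upwards [Filter.eventually_ge_atTop (T + 1)] with t ht
  by_contra h
  push_neg at h
  have htS : t ∈ r ⁻¹' Metric.closedBall ξ b := by
    simp only [Set.mem_preimage, Metric.mem_closedBall]
    rw [dist_comm]; linarith
  have := hT htS
  have h1 : T + 1 ≤ T := le_trans ht this
  simp at h1

/-! ### Sampling a continuous function with small steps -/

open Classical in
/-- A uniform-continuity modulus for `f` on `[0, n]`, target distance `1`. -/
noncomputable def etaMod (f : ℝ → X) (n : ℕ) : ℝ :=
  if h : ∃ δ, 0 < δ ∧ ∀ u ∈ Set.Icc (0:ℝ) (n:ℝ), ∀ v ∈ Set.Icc (0:ℝ) (n:ℝ),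
      dist u v < δ → dist (f u) (f v) < 1 then h.choose else 1

lemma etaMod_pos (f : ℝ → X) (n : ℕ) : 0 < etaMod f n := by
  unfold etaMod
  split
  · next h => exact h.choose_spec.1
  · exact one_pos

lemma etaMod_spec {f : ℝ → X} (hf : Continuous f) (n : ℕ) :
    ∀ u ∈ Set.Icc (0:ℝ) (n:ℝ), ∀ v ∈ Set.Icc (0:ℝ) (n:ℝ),
      dist u v < etaMod f n → dist (f u) (f v) < 1 := by
  have huc := (isCompact_Icc (a := (0:ℝ)) (b := (n:ℝ))).uniformContinuousOn_of_continuous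
    hf.continuousOn
  rw [Metric.uniformContinuousOn_iff] at huc
  obtain ⟨δ, hδ, hspec⟩ := huc 1 one_pos
  have h : ∃ δ, 0 < δ ∧ ∀ u ∈ Set.Icc (0:ℝ) (n:ℝ), ∀ v ∈ Set.Icc (0:ℝ) (n:ℝ),
      dist u v < δ → dist (f u) (f v) < 1 := ⟨δ, hδ, hspec⟩
  unfold etaMod
  rw [dif_pos h]
  exact h.choose_spec.2

/-- The sampling parameters: strictly increasing, hitting every natural number,
with consecutive values within the modulus. -/
noncomputable def phiSamp (f : ℝ → X) : ℕ → ℝ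
  | 0 => 0
  | i + 1 => min (phiSamp f i + etaMod f (⌊phiSamp f i⌋₊ + 1) / 2) ((⌊phiSamp f i⌋₊ : ℝ) + 1)

lemma phiSamp_nonneg (f : ℝ → X) (i : ℕ) : 0 ≤ phiSamp f i := by
  induction i with
  | zero => simp [phiSamp]
  | succ i ih =>
    unfold phiSamp
    apply le_min
    · have := etaMod_pos f (⌊phiSamp f i⌋₊ + 1); linarith
    · positivity

lemma phiSamp_lt_succ (f : ℝ → X) (i : ℕ) : phiSamp f i < phiSamp f (i + 1) := by
  have heq : phiSamp f (i + 1)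
      = min (phiSamp f i + etaMod f (⌊phiSamp f i⌋₊ + 1) / 2) ((⌊phiSamp f i⌋₊ : ℝ) + 1) := rfl
  rw [heq]
  apply lt_min
  · have := etaMod_pos f (⌊phiSamp f i⌋₊ + 1); linarith
  · exact Nat.lt_floor_add_one _

lemma phiSamp_strictMono (f : ℝ → X) : StrictMono (phiSamp f) :=
  strictMono_nat_of_lt_succ (phiSamp_lt_succ f)

lemma phiSamp_succ_le (f : ℝ → X) (i : ℕ) :
    phiSamp f (i + 1) ≤ (⌊phiSamp f i⌋₊ : ℝ) + 1 := min_le_right _ _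

lemma phiSamp_step_dist {f : ℝ → X} (hf : Continuous f) (i : ℕ) :
    dist (f (phiSamp f i)) (f (phiSamp f (i + 1))) < 1 := by
  set n := ⌊phiSamp f i⌋₊ + 1 with hn
  have h0 : 0 ≤ phiSamp f i := phiSamp_nonneg f i
  have h1 : phiSamp f i ≤ (n : ℝ) := by
    rw [hn]; push_cast; exact le_of_lt (Nat.lt_floor_add_one _)
  have h2 : phiSamp f (i + 1) ≤ (n : ℝ) := by
    rw [hn]; push_cast; exact phiSamp_succ_le f i
  have h3 : 0 ≤ phiSamp f (i + 1) := phiSamp_nonneg f _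
  apply etaMod_spec hf n _ ⟨h0, h1⟩ _ ⟨h3, h2⟩
  rw [Real.dist_eq, abs_of_nonpos (by have := phiSamp_lt_succ f i; linarith)]
  have hmin : phiSamp f (i + 1)
      = min (phiSamp f i + etaMod f (⌊phiSamp f i⌋₊ + 1) / 2) ((⌊phiSamp f i⌋₊ : ℝ) + 1) := rfl
  have h4 : phiSamp f (i + 1) ≤ phiSamp f i + etaMod f n / 2 := by
    rw [hmin]; exact min_le_left _ _
  have := etaMod_pos f n
  linarith

lemma phiSamp_hits (f : ℝ → X) (n : ℕ) : ∃ i, phiSamp f i = (n : ℝ) := by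
  induction n with
  | zero => exact ⟨0, by simp [phiSamp]⟩
  | succ n ih =>
    obtain ⟨i, hi⟩ := ih
    set c := etaMod f (n + 1) / 2 with hc
    have hc0 : 0 < c := by have := etaMod_pos f (n + 1); rw [hc]; linarith
    have key : ∀ k : ℕ, (∃ j, phiSamp f (i + j) = (n : ℝ) + 1) ∨
        (phiSamp f (i + k) < (n : ℝ) + 1 ∧ (n : ℝ) + k * c ≤ phiSamp f (i + k)) := by
      intro k
      induction k with
      | zero =>
        right
        refine ⟨?_, ?_⟩
        · rw [Nat.add_zero, hi]; linarith
        · rw [Nat.add_zero, hi]; simp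
      | succ k ihk =>
        rcases ihk with h | ⟨hlt, hge⟩
        · left; exact h
        · have hge' : (n : ℝ) ≤ phiSamp f (i + k) := by nlinarith [Nat.cast_nonneg (α := ℝ) k]
          have hfl : ⌊phiSamp f (i + k)⌋₊ = n := by
            rw [Nat.floor_eq_iff (by linarith)]
            exact ⟨hge', by push_cast; linarith⟩
          have heq : phiSamp f (i + k + 1) =
              min (phiSamp f (i + k) + c) ((n : ℝ) + 1) := by
            have h0 : phiSamp f (i + k + 1) = min (phiSamp f (i + k)
                + etaMod f (⌊phiSamp f (i + k)⌋₊ + 1) / 2)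
                ((⌊phiSamp f (i + k)⌋₊ : ℝ) + 1) := rfl
            rw [h0, hfl, hc]
          by_cases hbig : (n : ℝ) + 1 ≤ phiSamp f (i + k) + c
          · left
            refine ⟨k + 1, ?_⟩
            rw [show i + (k + 1) = i + k + 1 by ring, heq, min_eq_right hbig]
          · right
            push_neg at hbig
            rw [show i + (k + 1) = i + k + 1 by ring, heq, min_eq_left hbig.le]
            constructor
            · linarith
            · push_cast; nlinarith
    obtain ⟨k, hk⟩ := exists_nat_gt (1 / c)
    rcases key k with ⟨j, hj⟩ | ⟨hlt, hge⟩
    · exact ⟨i + j, by push_cast at hj ⊢; linarith⟩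
    · exfalso
      have : 1 < k * c := by
        rw [div_lt_iff₀ hc0] at hk; linarith
      linarith

lemma phiSamp_tendsto (f : ℝ → X) :
    Filter.Tendsto (phiSamp f) Filter.atTop Filter.atTop := by
  apply Filter.tendsto_atTop_atTop_of_monotone (phiSamp_strictMono f).monotone
  intro b
  obtain ⟨n, hn⟩ := exists_nat_ge b
  obtain ⟨i, hi⟩ := phiSamp_hits f n
  exact ⟨i, by rw [hi]; exact hn⟩

/-! ### The coarse sequence associated to a ray -/

noncomputable def rReal (r : ℝ≥0 → X) : ℝ → X := fun t => r (Real.toNNReal t)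

noncomputable def seqOfRay (r : ℝ≥0 → X) : ℕ → X :=
  fun i => rReal r (phiSamp (rReal r) i)

lemma rReal_continuous {r : ℝ≥0 → X} (hr : Continuous r) : Continuous (rReal r) :=
  hr.comp continuous_real_toNNReal

lemma seqOfRay_step {r : ℝ≥0 → X} (hr : Continuous r) (i : ℕ) :
    dist (seqOfRay r i) (seqOfRay r (i + 1)) ≤ 1 :=
  le_of_lt (phiSamp_step_dist (rReal_continuous hr) i)

lemma toNNReal_phiSamp_tendsto (f : ℝ → X) :
    Filter.Tendsto (fun i => Real.toNNReal (phiSamp f i)) Filter.atTop Filter.atTop :=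
  Real.tendsto_toNNReal_atTop.comp (phiSamp_tendsto f)

lemma seqOfRay_coarse
    (hproper : ∀ B : Set X, IsClosed B → Bornology.IsBounded B → IsCompact B)
    (ξ : X) {r : ℝ≥0 → X} (hr : IsRay r) : IsCoarseSeqM ξ (seqOfRay r) := by
  constructor
  · exact ⟨1, seqOfRay_step hr.1⟩
  · exact (ray_dist_tendsto hproper ξ hr).comp (toNNReal_phiSamp_tendsto (rReal r))

lemma seqOfRay_hits (r : ℝ≥0 → X) (n : ℕ) :
    ∃ i, phiSamp (rReal r) i = (n : ℝ) ∧ seqOfRay r i = r ((n : ℕ) : ℝ≥0) := by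
  obtain ⟨i, hi⟩ := phiSamp_hits (rReal r) n
  refine ⟨i, hi, ?_⟩
  have h0 : seqOfRay r i = rReal r (phiSamp (rReal r) i) := rfl
  rw [h0, hi]
  unfold rReal
  rw [Real.toNNReal_natCast]


/-! ### Paths along rays -/

lemma joinedIn_ray_segment {r : ℝ≥0 → X} (hr : Continuous r) {u v : ℝ≥0} (huv : u ≤ v)
    {F : Set X} (hF : ∀ t : ℝ≥0, u ≤ t → t ≤ v → r t ∈ F) : JoinedIn F (r u) (r v) := by
  have hcont : Continuous (fun τ : unitInterval => r (u + (v - u) * Real.toNNReal τ.1)) := by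
    apply hr.comp
    exact continuous_const.add (continuous_const.mul
      (continuous_real_toNNReal.comp continuous_subtype_val))
  have hmem : ∀ τ : unitInterval, u ≤ u + (v - u) * Real.toNNReal τ.1 ∧
      u + (v - u) * Real.toNNReal τ.1 ≤ v := by
    intro τ
    constructor
    · exact le_self_add
    · have h1 : Real.toNNReal τ.1 ≤ 1 := by
        rw [show (1:ℝ≥0) = Real.toNNReal 1 by simp]
        exact Real.toNNReal_mono τ.2.2
      have h2 : (v - u) * Real.toNNReal τ.1 ≤ v - u := by
        calc (v - u) * Real.toNNReal τ.1 ≤ (v - u) * 1 := by gcongr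
          _ = v - u := mul_one _
      calc u + (v - u) * Real.toNNReal τ.1 ≤ u + (v - u) := by gcongr
        _ = v := add_tsub_cancel_of_le huv
  refine ⟨⟨⟨fun τ => r (u + (v - u) * Real.toNNReal τ.1), hcont⟩, ?_, ?_⟩, ?_⟩
  · simp
  · show r (u + (v - u) * Real.toNNReal (1:ℝ)) = r v
    rw [Real.toNNReal_one, mul_one, add_tsub_cancel_of_le huv]
  · intro τ
    exact hF _ (hmem τ).1 (hmem τ).2

/-! ### SameEnd is symmetric and transitive -/

lemma sameEnd_symm {Y : Type*} [TopologicalSpace Y] {r₀ r₁ : ℝ≥0 → Y}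
    (h : SameEnd r₀ r₁) : SameEnd r₁ r₀ := by
  intro K hK
  obtain ⟨N, hN⟩ := h K hK
  refine ⟨N, fun x hx y hy => ?_⟩
  rw [Set.union_comm] at hx hy
  exact hN x hx y hy

lemma sameEnd_trans {Y : Type*} [TopologicalSpace Y] {r₀ r₁ r₂ : ℝ≥0 → Y}
    (h1 : SameEnd r₀ r₁) (h2 : SameEnd r₁ r₂) : SameEnd r₀ r₂ := by
  intro K hK
  obtain ⟨N₁, hN₁⟩ := h1 K hK
  obtain ⟨N₂, hN₂⟩ := h2 K hK
  set N := max N₁ N₂ with hN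
  have hmid : ∀ x ∈ (r₀ '' {t : ℝ≥0 | (N : ℝ≥0) ≤ t}) ∪ (r₂ '' {t : ℝ≥0 | (N : ℝ≥0) ≤ t}),
      JoinedIn Kᶜ x (r₁ ((N : ℕ) : ℝ≥0)) := by
    intro x hx
    have hmem1 : r₁ ((N : ℕ) : ℝ≥0) ∈ r₁ '' {t : ℝ≥0 | ((N₁ : ℕ) : ℝ≥0) ≤ t} :=
      ⟨_, by simp [Set.mem_setOf_eq]; exact_mod_cast le_max_left N₁ N₂, rfl⟩
    have hmem2 : r₁ ((N : ℕ) : ℝ≥0) ∈ r₁ '' {t : ℝ≥0 | ((N₂ : ℕ) : ℝ≥0) ≤ t} :=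
      ⟨_, by simp [Set.mem_setOf_eq]; exact_mod_cast le_max_right N₁ N₂, rfl⟩
    rcases hx with ⟨t, ht, rfl⟩ | ⟨t, ht, rfl⟩
    · have hx1 : r₀ t ∈ r₀ '' {t : ℝ≥0 | ((N₁ : ℕ) : ℝ≥0) ≤ t} := by
        refine ⟨t, ?_, rfl⟩
        simp only [Set.mem_setOf_eq] at ht ⊢
        refine le_trans ?_ ht
        exact_mod_cast le_max_left N₁ N₂
      exact hN₁ _ (Or.inl hx1) _ (Or.inr hmem1)
    · have hx1 : r₂ t ∈ r₂ '' {t : ℝ≥0 | ((N₂ : ℕ) : ℝ≥0) ≤ t} := by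
        refine ⟨t, ?_, rfl⟩
        simp only [Set.mem_setOf_eq] at ht ⊢
        refine le_trans ?_ ht
        exact_mod_cast le_max_right N₁ N₂
      exact (hN₂ _ (Or.inl hmem2) _ (Or.inr hx1)).symm
  exact ⟨N, fun x hx y hy => (hmid x hx).trans (hmid y hy).symm⟩

/-! ### Tail of rayOf avoids balls -/

lemma rayOf_tail_out (hgeo : IsGeodesicSpace X) {ξ : X} {s : ℕ → X} {K R : ℝ}
    (hK : ∀ i, dist (s i) (s (i + 1)) ≤ K) {N : ℕ}
    (hN : ∀ n, N ≤ n → R + K < dist ξ (s n)) :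
    ∀ u : ℝ≥0, ((N : ℕ) : ℝ≥0) ≤ u → R < dist ξ (rayOf hgeo s u) := by
  intro u hu
  have hfl : N ≤ ⌊(u:ℝ)⌋₊ := Nat.le_floor (by exact_mod_cast hu)
  have h1 := hN _ hfl
  have h2 := rayOf_dist_floor hgeo hK u
  have h3 := dist_triangle ξ (rayOf hgeo s u) (s ⌊(u:ℝ)⌋₊)
  have h4 : dist (rayOf hgeo s u) (s ⌊(u:ℝ)⌋₊) = dist (s ⌊(u:ℝ)⌋₊) (rayOf hgeo s u) :=
    dist_comm _ _
  linarith

/-! ### Subsequences give rays with the same end -/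

lemma sameEnd_rayOf_of_subseq (hgeo : IsGeodesicSpace X) (ξ : X) {s t : ℕ → X}
    (hs : IsCoarseSeqM ξ s) (ht : IsCoarseSeqM ξ t) (hsub : IsSubseq s t) :
    SameEnd (rayOf hgeo s) (rayOf hgeo t) := by
  obtain ⟨k, hkmono, hks⟩ := hsub
  obtain ⟨Ks, hKs⟩ := hs.1
  obtain ⟨Kt, hKt⟩ := ht.1
  intro C hC
  obtain ⟨R, hR⟩ := hC.isBounded.subset_closedBall ξ
  have hev : ∀ᶠ n in Filter.atTop, R + Ks < dist ξ (s n) ∧ R + Kt < dist ξ (t n) :=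
    (Filter.tendsto_atTop.mp hs.2 (R + Ks + 1)).and
      (Filter.tendsto_atTop.mp ht.2 (R + Kt + 1)) |>.mono (by intro n hn; constructor <;> linarith [hn.1, hn.2])
  obtain ⟨N, hNspec⟩ := Filter.eventually_atTop.mp hev
  have houts : ∀ u : ℝ≥0, ((N : ℕ) : ℝ≥0) ≤ u → rayOf hgeo s u ∈ Cᶜ := by
    intro u hu
    have := rayOf_tail_out hgeo hKs (fun n hn => (hNspec n hn).1) u hu
    intro hmem
    have h2 := hR hmem
    rw [Metric.mem_closedBall, dist_comm] at h2
    linarith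
  have houtt : ∀ u : ℝ≥0, ((N : ℕ) : ℝ≥0) ≤ u → rayOf hgeo t u ∈ Cᶜ := by
    intro u hu
    have := rayOf_tail_out hgeo hKt (fun n hn => (hNspec n hn).2) u hu
    intro hmem
    have h2 := hR hmem
    rw [Metric.mem_closedBall, dist_comm] at h2
    linarith
  -- the anchor point
  set z := rayOf hgeo t ((k N : ℕ) : ℝ≥0) with hz
  have hkN : (N : ℕ) ≤ k N := hkmono.le_apply
  have hanchor : ∀ x ∈ (rayOf hgeo s '' {u : ℝ≥0 | ((N : ℕ) : ℝ≥0) ≤ u}) ∪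
      (rayOf hgeo t '' {u : ℝ≥0 | ((N : ℕ) : ℝ≥0) ≤ u}), JoinedIn Cᶜ x z := by
    rintro x (⟨u, hu, rfl⟩ | ⟨u, hu, rfl⟩)
    · -- x on the ray of s
      simp only [Set.mem_setOf_eq] at hu
      obtain ⟨m, hm1, hm2⟩ : ∃ m : ℕ, N ≤ m ∧ u ≤ ((m : ℕ) : ℝ≥0) := by
        obtain ⟨m, hm⟩ := exists_nat_ge (u : ℝ)
        refine ⟨max N m, le_max_left _ _, ?_⟩
        have : (u:ℝ) ≤ ((max N m : ℕ) : ℝ) := by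
          calc (u:ℝ) ≤ (m:ℝ) := hm
            _ ≤ ((max N m : ℕ) : ℝ) := by exact_mod_cast le_max_right N m
        exact_mod_cast this
      -- path along ray of s from u to m
      have j1 : JoinedIn Cᶜ (rayOf hgeo s u) (rayOf hgeo s ((m : ℕ) : ℝ≥0)) :=
        joinedIn_ray_segment (rayOf_continuous hgeo hKs) hm2
          (fun w hw _ => houts w (le_trans hu hw))
      -- s m = t (k m)
      have heq : rayOf hgeo s ((m : ℕ) : ℝ≥0) = rayOf hgeo t ((k m : ℕ) : ℝ≥0) := by
        rw [rayOf_nat, rayOf_nat, hks]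
      -- path along ray of t from k N to k m
      have hkm : ((k N : ℕ) : ℝ≥0) ≤ ((k m : ℕ) : ℝ≥0) := by
        exact_mod_cast hkmono.monotone hm1
      have j2 : JoinedIn Cᶜ (rayOf hgeo t ((k N : ℕ) : ℝ≥0)) (rayOf hgeo t ((k m : ℕ) : ℝ≥0)) :=
        joinedIn_ray_segment (rayOf_continuous hgeo hKt) hkm
          (fun w hw _ => houtt w (le_trans (by exact_mod_cast hkN) hw))
      rw [heq] at j1
      rw [hz]
      exact j1.trans j2.symm
    · -- x on the ray of t
      simp only [Set.mem_setOf_eq] at hu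
      obtain ⟨m, hm1, hm2⟩ : ∃ m : ℕ, N ≤ m ∧ u ≤ ((k m : ℕ) : ℝ≥0) := by
        obtain ⟨m, hm⟩ := exists_nat_ge (u : ℝ)
        refine ⟨max N m, le_max_left _ _, ?_⟩
        have h5 : (max N m : ℕ) ≤ k (max N m) := hkmono.le_apply
        have : (u:ℝ) ≤ ((k (max N m) : ℕ) : ℝ) := by
          calc (u:ℝ) ≤ (m:ℝ) := hm
            _ ≤ ((max N m : ℕ) : ℝ) := by exact_mod_cast le_max_right N m
            _ ≤ _ := by exact_mod_cast h5
        exact_mod_cast this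
      have j1 : JoinedIn Cᶜ (rayOf hgeo t u) (rayOf hgeo t ((k m : ℕ) : ℝ≥0)) :=
        joinedIn_ray_segment (rayOf_continuous hgeo hKt) hm2
          (fun w hw _ => houtt w (le_trans hu hw))
      have hkm : ((k N : ℕ) : ℝ≥0) ≤ ((k m : ℕ) : ℝ≥0) := by
        exact_mod_cast hkmono.monotone hm1
      have hkNN : ((N : ℕ) : ℝ≥0) ≤ ((k N : ℕ) : ℝ≥0) := by exact_mod_cast hkN
      have j2 : JoinedIn Cᶜ (rayOf hgeo t ((k N : ℕ) : ℝ≥0)) (rayOf hgeo t ((k m : ℕ) : ℝ≥0)) :=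
        joinedIn_ray_segment (rayOf_continuous hgeo hKt) hkm
          (fun w hw _ => houtt w (le_trans hkNN hw))
      rw [hz]
      exact j1.trans j2.symm
  exact ⟨N, fun x hx y hy => (hanchor x hx).trans (hanchor y hy).symm⟩


/-! ### `s` is a subsequence of the sampling of its ray -/

lemma isSubseq_seqOfRay_rayOf (hgeo : IsGeodesicSpace X) (s : ℕ → X) :
    IsSubseq s (seqOfRay (rayOf hgeo s)) := by
  set r := rayOf hgeo s with hrdef
  choose k hk1 hk2 using seqOfRay_hits r
  refine ⟨k, ?_, ?_⟩
  · intro a b hab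
    have h : phiSamp (rReal r) (k a) < phiSamp (rReal r) (k b) := by
      rw [hk1, hk1]; exact_mod_cast hab
    exact (phiSamp_strictMono (rReal r)).lt_iff_lt.mp h
  · intro i
    rw [hk2 i, hrdef, rayOf_nat]

/-! ### A ray has the same end as the geodesic ray through its sampled sequence -/

lemma sameEnd_ray_rayOf_seqOfRay
    (hproper : ∀ B : Set X, IsClosed B → Bornology.IsBounded B → IsCompact B)
    (hgeo : IsGeodesicSpace X) (ξ : X) {r : ℝ≥0 → X} (hr : IsRay r) :
    SameEnd r (rayOf hgeo (seqOfRay r)) := by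
  set s := seqOfRay r with hsdef
  have hstep : ∀ i, dist (s i) (s (i + 1)) ≤ 1 := seqOfRay_step hr.1
  intro C hC
  obtain ⟨R, hR⟩ := hC.isBounded.subset_closedBall ξ
  have hdiv := ray_dist_tendsto hproper ξ hr
  obtain ⟨T, hT⟩ := Filter.eventually_atTop.mp (Filter.tendsto_atTop.mp hdiv (R + 3))
  obtain ⟨N₀, hN₀⟩ := Filter.eventually_atTop.mp
    ((phiSamp_tendsto (rReal r)).eventually_ge_atTop ((T : ℝ≥0) : ℝ))
  set N₁ := ⌈(T : ℝ≥0)⌉₊ with hN₁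
  set N := max N₀ N₁ with hNdef
  have hTN : T ≤ ((N : ℕ) : ℝ≥0) := by
    calc T ≤ ((N₁ : ℕ) : ℝ≥0) := Nat.le_ceil T
      _ ≤ ((N : ℕ) : ℝ≥0) := by exact_mod_cast le_max_right N₀ N₁
  have hphiT : ∀ i, N ≤ i → T ≤ Real.toNNReal (phiSamp (rReal r) i) := by
    intro i hi
    have h1 : ((T : ℝ≥0) : ℝ) ≤ phiSamp (rReal r) i := hN₀ i (le_trans (le_max_left _ _) hi)
    calc T = Real.toNNReal ((T : ℝ≥0) : ℝ) := (Real.toNNReal_coe).symm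
      _ ≤ _ := Real.toNNReal_mono h1
  have hsdist : ∀ i, N ≤ i → R + 3 ≤ dist ξ (s i) := by
    intro i hi
    exact hT _ (hphiT i hi)
  have hout_r : ∀ u : ℝ≥0, ((N : ℕ) : ℝ≥0) ≤ u → r u ∈ Cᶜ := by
    intro u hu hmem
    have h1 := hT u (le_trans hTN hu)
    have h2 := hR hmem
    rw [Metric.mem_closedBall, dist_comm] at h2
    linarith
  have hout_G : ∀ u : ℝ≥0, ((N : ℕ) : ℝ≥0) ≤ u → rayOf hgeo s u ∈ Cᶜ := by
    intro u hu hmem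
    have h1 : R + 1 < dist ξ (rayOf hgeo s u) := by
      apply rayOf_tail_out hgeo hstep (N := N) _ u hu
      intro n hn
      have := hsdist n hn
      linarith
    have h2 := hR hmem
    rw [Metric.mem_closedBall, dist_comm] at h2
    linarith
  set z := rayOf hgeo s ((N : ℕ) : ℝ≥0) with hz
  have hanchor : ∀ x ∈ (r '' {u : ℝ≥0 | ((N : ℕ) : ℝ≥0) ≤ u}) ∪
      (rayOf hgeo s '' {u : ℝ≥0 | ((N : ℕ) : ℝ≥0) ≤ u}), JoinedIn Cᶜ x z := by
    rintro x (⟨u, hu, rfl⟩ | ⟨u, hu, rfl⟩)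
    · simp only [Set.mem_setOf_eq] at hu
      -- choose i ≥ N with sample parameter ≥ u
      obtain ⟨i₀, hi₀⟩ := Filter.eventually_atTop.mp
        ((phiSamp_tendsto (rReal r)).eventually_ge_atTop ((u : ℝ≥0) : ℝ))
      set i := max i₀ N with hi
      have hiN : N ≤ i := le_max_right _ _
      have hui : u ≤ Real.toNNReal (phiSamp (rReal r) i) := by
        have h1 : ((u : ℝ≥0) : ℝ) ≤ phiSamp (rReal r) i := hi₀ i (le_max_left _ _)
        calc u = Real.toNNReal ((u : ℝ≥0) : ℝ) := (Real.toNNReal_coe).symm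
          _ ≤ _ := Real.toNNReal_mono h1
      have j1 : JoinedIn Cᶜ (r u) (r (Real.toNNReal (phiSamp (rReal r) i))) :=
        joinedIn_ray_segment hr.1 hui (fun w hw _ => hout_r w (le_trans hu hw))
      have heq : r (Real.toNNReal (phiSamp (rReal r) i)) = rayOf hgeo s ((i : ℕ) : ℝ≥0) := by
        rw [rayOf_nat]; rfl
      rw [heq] at j1
      have hNi : ((N : ℕ) : ℝ≥0) ≤ ((i : ℕ) : ℝ≥0) := by exact_mod_cast hiN
      have j2 : JoinedIn Cᶜ z (rayOf hgeo s ((i : ℕ) : ℝ≥0)) := by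
        rw [hz]
        exact joinedIn_ray_segment (rayOf_continuous hgeo hstep) hNi
          (fun w hw _ => hout_G w hw)
      exact j1.trans j2.symm
    · simp only [Set.mem_setOf_eq] at hu
      have j : JoinedIn Cᶜ z (rayOf hgeo s u) := by
        rw [hz]
        exact joinedIn_ray_segment (rayOf_continuous hgeo hstep) hu
          (fun w hw _ => hout_G w hw)
      exact j.symm
  exact ⟨N, fun x hx y hy => (hanchor x hx).trans (hanchor y hy).symm⟩


/-! ### Gluing infinitely many finite blocks into one sequence -/

def cumLen (L : ℕ → ℕ) : ℕ → ℕ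
  | 0 => 0
  | m + 1 => cumLen L m + L m

def blockIdx (L : ℕ → ℕ) (i : ℕ) : ℕ :=
  Nat.findGreatest (fun m => cumLen L m ≤ i) i

def glueSeq (B : ℕ → ℕ → X) (L : ℕ → ℕ) : ℕ → X :=
  fun i => B (blockIdx L i) (i - cumLen L (blockIdx L i))

section Glue

variable {B : ℕ → ℕ → X} {L : ℕ → ℕ}

lemma cumLen_mono (L : ℕ → ℕ) : Monotone (cumLen L) :=
  monotone_nat_of_le_succ (fun m => by simp [cumLen])

lemma self_le_cumLen (hL : ∀ m, 1 ≤ L m) : ∀ m, m ≤ cumLen L m := by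
  intro m
  induction m with
  | zero => simp [cumLen]
  | succ m ih =>
    have := hL m
    simp only [cumLen]
    omega

lemma cumLen_lt_succ (hL : ∀ m, 1 ≤ L m) (m : ℕ) : cumLen L m < cumLen L (m + 1) := by
  have := hL m; simp only [cumLen]; omega

lemma cumLen_strictMono (hL : ∀ m, 1 ≤ L m) : StrictMono (cumLen L) :=
  strictMono_nat_of_lt_succ (cumLen_lt_succ hL)

lemma blockIdx_spec (L : ℕ → ℕ) (i : ℕ) : cumLen L (blockIdx L i) ≤ i :=
  Nat.findGreatest_spec (P := fun m => cumLen L m ≤ i) (Nat.zero_le i)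
    (by simp [cumLen] : cumLen L 0 ≤ i)

lemma lt_cumLen_succ_blockIdx (hL : ∀ m, 1 ≤ L m) (i : ℕ) :
    i < cumLen L (blockIdx L i + 1) := by
  by_contra h
  push_neg at h
  have hle : blockIdx L i + 1 ≤ i := le_trans (self_le_cumLen hL _) h
  have := Nat.le_findGreatest (P := fun m => cumLen L m ≤ i) hle h
  unfold blockIdx at this
  omega

lemma ge_blockIdx_of_le (hL : ∀ m, 1 ≤ L m) {M i : ℕ} (h : cumLen L M ≤ i) :
    M ≤ blockIdx L i :=
  Nat.le_findGreatest (P := fun m => cumLen L m ≤ i) (le_trans (self_le_cumLen hL M) h) h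

lemma blockIdx_eval (hL : ∀ m, 1 ≤ L m) {m j : ℕ} (hj : j < L m) :
    blockIdx L (cumLen L m + j) = m := by
  have h1 : m ≤ blockIdx L (cumLen L m + j) :=
    ge_blockIdx_of_le hL (Nat.le_add_right _ _)
  have h2 := lt_cumLen_succ_blockIdx hL (cumLen L m + j)
  by_contra h
  have h3 : m + 1 ≤ blockIdx L (cumLen L m + j) := by omega
  have h4 : cumLen L (m + 1) ≤ cumLen L (blockIdx L (cumLen L m + j)) :=
    cumLen_mono L h3
  have h5 := blockIdx_spec L (cumLen L m + j)
  have h6 : cumLen L (m + 1) = cumLen L m + L m := rfl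
  omega

lemma glueSeq_eval (hL : ∀ m, 1 ≤ L m) {m j : ℕ} (hj : j < L m) :
    glueSeq B L (cumLen L m + j) = B m j := by
  unfold glueSeq
  rw [blockIdx_eval hL hj]
  congr 1
  omega

lemma glueSeq_eval_top (hL : ∀ m, 1 ≤ L m) (hjunc : ∀ m, B m (L m) = B (m + 1) 0) (m : ℕ) :
    glueSeq B L (cumLen L m + L m) = B m (L m) := by
  have h : cumLen L m + L m = cumLen L (m + 1) + 0 := by simp [cumLen]
  rw [h, glueSeq_eval hL (hL (m + 1)), hjunc]

lemma glueSeq_decomp (hL : ∀ m, 1 ≤ L m) (i : ℕ) :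
    ∃ m j, j < L m ∧ i = cumLen L m + j ∧ glueSeq B L i = B m j := by
  refine ⟨blockIdx L i, i - cumLen L (blockIdx L i), ?_, ?_, rfl⟩
  · have h1 := blockIdx_spec L i
    have h2 := lt_cumLen_succ_blockIdx hL i
    have h3 : cumLen L (blockIdx L i + 1) = cumLen L (blockIdx L i) + L (blockIdx L i) := rfl
    omega
  · have h1 := blockIdx_spec L i
    omega

lemma glueSeq_step (hL : ∀ m, 1 ≤ L m) (hjunc : ∀ m, B m (L m) = B (m + 1) 0)
    {K : ℝ} (hstep : ∀ m j, j < L m → dist (B m j) (B m (j + 1)) ≤ K) (i : ℕ) :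
    dist (glueSeq B L i) (glueSeq B L (i + 1)) ≤ K := by
  obtain ⟨m, j, hj, hi, hval⟩ := glueSeq_decomp (B := B) hL i
  have hnext : glueSeq B L (i + 1) = B m (j + 1) := by
    rcases Nat.lt_or_ge (j + 1) (L m) with h | h
    · rw [hi, show cumLen L m + j + 1 = cumLen L m + (j + 1) by ring]
      exact glueSeq_eval hL h
    · have hjeq : j + 1 = L m := by omega
      rw [hi, show cumLen L m + j + 1 = cumLen L m + L m by omega,
        glueSeq_eval_top hL hjunc, hjeq]
  rw [hval, hnext]
  exact hstep m j hj

lemma glueSeq_tail (hL : ∀ m, 1 ≤ L m) {M i : ℕ} (h : cumLen L M ≤ i) :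
    ∃ m, M ≤ m ∧ ∃ j, j ≤ L m ∧ glueSeq B L i = B m j := by
  obtain ⟨m, j, hj, hi, hval⟩ := glueSeq_decomp (B := B) hL i
  refine ⟨m, ?_, j, le_of_lt hj, hval⟩
  have := ge_blockIdx_of_le hL h
  have h2 : blockIdx L i = m := by
    rw [hi]; exact blockIdx_eval hL hj
  omega

end Glue



/-! ### ε-equivalence implies σ-equivalence -/

lemma shift_coarse {ξ : X} {s : ℕ → X} (hs : IsCoarseSeqM ξ s) (a0 : ℕ) :
    IsCoarseSeqM ξ (fun i => s (a0 + i)) := by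
  obtain ⟨⟨K, hK⟩, hdiv⟩ := hs
  refine ⟨⟨K, fun i => by
    have h : a0 + (i + 1) = (a0 + i) + 1 := by omega
    simpa [h] using hK (a0 + i)⟩, ?_⟩
  have h : Filter.Tendsto (fun i : ℕ => a0 + i) Filter.atTop Filter.atTop := by
    apply Filter.tendsto_atTop_atTop_of_monotone (fun x y hxy => by omega)
    intro b; exact ⟨b, by omega⟩
  exact hdiv.comp h

lemma isSubseq_shift (s : ℕ → X) (a0 : ℕ) : IsSubseq (fun i => s (a0 + i)) s :=
  ⟨fun i => a0 + i, fun x y h => Nat.add_lt_add_left h a0, fun i => rfl⟩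

lemma sigmaRel_of_epsRel {ξ : X} {s t : ℕ → X} (hs : IsCoarseSeqM ξ s)
    (ht : IsCoarseSeqM ξ t) (heps : EpsRelM ξ s t) : SigmaRelM ξ s t := by
  obtain ⟨K₀, hK₀, hE⟩ := heps
  obtain ⟨Ks, hKs⟩ := hs.1
  obtain ⟨Kt, hKt⟩ := ht.1
  -- thresholds for chains
  choose P hP using fun m : ℕ => hE ((m : ℝ) + 1) (by positivity)
  -- thresholds for distance from the base point
  have hQex : ∀ m : ℕ, ∃ Q, ∀ i, Q ≤ i → (m : ℝ) < dist ξ (s i) ∧ (m : ℝ) < dist ξ (t i) := by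
    intro m
    have h := (Filter.tendsto_atTop.mp hs.2 ((m : ℝ) + 1)).and
      (Filter.tendsto_atTop.mp ht.2 ((m : ℝ) + 1))
    obtain ⟨Q, hQ⟩ := Filter.eventually_atTop.mp h
    exact ⟨Q, fun i hi => ⟨by linarith [(hQ i hi).1], by linarith [(hQ i hi).2]⟩⟩
  choose Q hQ using hQex
  -- the index sequence
  set a : ℕ → ℕ := fun m =>
    Nat.rec (max (P 0) (Q 0)) (fun m am => max (max (am + 1) (P (m + 1))) (Q (m + 1))) m
    with hadef
  have ha_succ : ∀ m, a (m + 1) = max (max (a m + 1) (P (m + 1))) (Q (m + 1)) := fun m => rfl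
  have ha_lt : ∀ m, a m < a (m + 1) := fun m => by rw [ha_succ]; omega
  have ha_mono : StrictMono a := strictMono_nat_of_lt_succ ha_lt
  have haP : ∀ m, P m ≤ a m := by
    intro m; cases m with
    | zero => exact le_max_left _ _
    | succ m => rw [ha_succ]; omega
  have haQ : ∀ m, Q m ≤ a m := by
    intro m; cases m with
    | zero => exact le_max_right _ _
    | succ m => rw [ha_succ]; omega
  -- the connecting chains
  have hCex : ∀ m : ℕ, ChainM K₀ {z | (m : ℝ) + 1 < dist ξ z} (s (a (m + 1))) (t (a m)) := by
    intro m
    apply hP m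
    · exact Or.inl ⟨a (m + 1), le_trans (haP m) (le_of_lt (ha_lt m)), rfl⟩
    · exact Or.inr ⟨a m, haP m, rfl⟩
  have hDex : ∀ m : ℕ, ChainM K₀ {z | (m : ℝ) + 1 < dist ξ z} (t (a (m + 1))) (s (a (m + 1))) := by
    intro m
    apply hP m
    · exact Or.inr ⟨a (m + 1), le_trans (haP m) (le_of_lt (ha_lt m)), rfl⟩
    · exact Or.inl ⟨a (m + 1), le_trans (haP m) (le_of_lt (ha_lt m)), rfl⟩
  choose nC cC hC0 hCn hCmem hCstep using hCex
  choose nD cD hD0 hDn hDmem hDstep using hDex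
  -- blocks
  set L : ℕ → ℕ := fun k =>
    if k % 4 = 0 then a (k / 4 + 1) - a (k / 4)
    else if k % 4 = 1 then nC (k / 4) + 1
    else if k % 4 = 2 then a (k / 4 + 1) - a (k / 4)
    else nD (k / 4) + 1 with hLdef
  set Bf : ℕ → ℕ → X := fun k j =>
    if k % 4 = 0 then s (a (k / 4) + j)
    else if k % 4 = 1 then cC (k / 4) (j - 1)
    else if k % 4 = 2 then t (a (k / 4) + j)
    else cD (k / 4) (j - 1) with hBdef
  -- evaluation of blocks
  have hL0 : ∀ q, L (4 * q) = a (q + 1) - a q := by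
    intro q
    have h1 : (4 * q) % 4 = 0 := by omega
    have h2 : (4 * q) / 4 = q := by omega
    simp [hLdef, h1, h2]
  have hL1 : ∀ q, L (4 * q + 1) = nC q + 1 := by
    intro q
    have h1 : (4 * q + 1) % 4 = 1 := by omega
    have h2 : (4 * q + 1) / 4 = q := by omega
    simp [hLdef, h1, h2]
  have hL2 : ∀ q, L (4 * q + 2) = a (q + 1) - a q := by
    intro q
    have h1 : (4 * q + 2) % 4 = 2 := by omega
    have h2 : (4 * q + 2) / 4 = q := by omega
    simp [hLdef, h1, h2]
  have hL3 : ∀ q, L (4 * q + 3) = nD q + 1 := by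
    intro q
    have h1 : (4 * q + 3) % 4 = 3 := by omega
    have h2 : (4 * q + 3) / 4 = q := by omega
    simp [hLdef, h1, h2]
  have hB0 : ∀ q j, Bf (4 * q) j = s (a q + j) := by
    intro q j
    have h1 : (4 * q) % 4 = 0 := by omega
    have h2 : (4 * q) / 4 = q := by omega
    simp [hBdef, h1, h2]
  have hB1 : ∀ q j, Bf (4 * q + 1) j = cC q (j - 1) := by
    intro q j
    have h1 : (4 * q + 1) % 4 = 1 := by omega
    have h2 : (4 * q + 1) / 4 = q := by omega
    simp [hBdef, h1, h2]
  have hB2 : ∀ q j, Bf (4 * q + 2) j = t (a q + j) := by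
    intro q j
    have h1 : (4 * q + 2) % 4 = 2 := by omega
    have h2 : (4 * q + 2) / 4 = q := by omega
    simp [hBdef, h1, h2]
  have hB3 : ∀ q j, Bf (4 * q + 3) j = cD q (j - 1) := by
    intro q j
    have h1 : (4 * q + 3) % 4 = 3 := by omega
    have h2 : (4 * q + 3) / 4 = q := by omega
    simp [hBdef, h1, h2]
  -- block lengths are positive
  have hcases : ∀ k : ℕ, (∃ q, k = 4 * q) ∨ (∃ q, k = 4 * q + 1) ∨ (∃ q, k = 4 * q + 2) ∨
      (∃ q, k = 4 * q + 3) := by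
    intro k
    have hd : k % 4 = 0 ∨ k % 4 = 1 ∨ k % 4 = 2 ∨ k % 4 = 3 := by omega
    rcases hd with h | h | h | h
    · exact Or.inl ⟨k / 4, by omega⟩
    · exact Or.inr (Or.inl ⟨k / 4, by omega⟩)
    · exact Or.inr (Or.inr (Or.inl ⟨k / 4, by omega⟩))
    · exact Or.inr (Or.inr (Or.inr ⟨k / 4, by omega⟩))
  have hL : ∀ k, 1 ≤ L k := by
    intro k
    rcases hcases k with ⟨q, rfl⟩ | ⟨q, rfl⟩ | ⟨q, rfl⟩ | ⟨q, rfl⟩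
    · rw [hL0]; have := ha_lt q; omega
    · rw [hL1]; omega
    · rw [hL2]; have := ha_lt q; omega
    · rw [hL3]; omega
  -- junctions match
  have hjunc : ∀ k, Bf k (L k) = Bf (k + 1) 0 := by
    intro k
    rcases hcases k with ⟨q, rfl⟩ | ⟨q, rfl⟩ | ⟨q, rfl⟩ | ⟨q, rfl⟩
    · have hk1 : 4 * q + 1 = (4 * q) + 1 := rfl
      rw [hL0, hB0, show (4 * q) + 1 = 4 * q + 1 from rfl, hB1]
      have he : a q + (a (q + 1) - a q) = a (q + 1) := by have := ha_lt q; omega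
      rw [he, show (0 : ℕ) - 1 = 0 from rfl, hC0]
    · rw [hL1, hB1, show (4 * q + 1) + 1 = 4 * q + 2 by omega, hB2]
      rw [show nC q + 1 - 1 = nC q by omega, hCn]
      simp
    · rw [hL2, hB2, show (4 * q + 2) + 1 = 4 * q + 3 by omega, hB3]
      have he : a q + (a (q + 1) - a q) = a (q + 1) := by have := ha_lt q; omega
      rw [he, show (0 : ℕ) - 1 = 0 from rfl, hD0]
    · rw [hL3, hB3, show (4 * q + 3) + 1 = 4 * (q + 1) by omega, hB0]
      rw [show nD q + 1 - 1 = nD q by omega, hDn]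
      simp
  -- step bounds
  set KU : ℝ := max (max Ks Kt) K₀ with hKU
  have hKU0 : 0 ≤ KU := le_trans (le_of_lt hK₀) (le_max_right _ _)
  have hstepB : ∀ k j, j < L k → dist (Bf k j) (Bf k (j + 1)) ≤ KU := by
    intro k j hj
    rcases hcases k with ⟨q, rfl⟩ | ⟨q, rfl⟩ | ⟨q, rfl⟩ | ⟨q, rfl⟩
    · rw [hB0, hB0, show a q + (j + 1) = (a q + j) + 1 by omega]
      exact le_trans (hKs _) (le_trans (le_max_left _ _) (le_max_left _ _))
    · rw [hB1, hB1]
      rcases Nat.eq_zero_or_pos j with hj0 | hj0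
      · subst hj0
        norm_num
        exact le_trans (le_of_lt hK₀) (le_max_right _ _)
      · rw [show j + 1 - 1 = (j - 1) + 1 by omega]
        apply le_trans (hCstep q (j - 1) ?_) (le_max_right _ _)
        rw [hL1] at hj; omega
    · rw [hB2, hB2, show a q + (j + 1) = (a q + j) + 1 by omega]
      exact le_trans (hKt _) (le_trans (le_max_right _ _) (le_max_left _ _))
    · rw [hB3, hB3]
      rcases Nat.eq_zero_or_pos j with hj0 | hj0
      · subst hj0
        norm_num
        exact le_trans (le_of_lt hK₀) (le_max_right _ _)
      · rw [show j + 1 - 1 = (j - 1) + 1 by omega]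
        apply le_trans (hDstep q (j - 1) ?_) (le_max_right _ _)
        rw [hL3] at hj; omega
  -- lower distance bounds
  have hlow : ∀ k j, j ≤ L k → ((k / 4 : ℕ) : ℝ) < dist ξ (Bf k j) := by
    intro k j hj
    rcases hcases k with ⟨q, rfl⟩ | ⟨q, rfl⟩ | ⟨q, rfl⟩ | ⟨q, rfl⟩
    · rw [show (4 * q) / 4 = q by omega, hB0]
      exact (hQ q (a q + j) (le_trans (haQ q) (by omega))).1
    · rw [show (4 * q + 1) / 4 = q by omega, hB1]
      have hmem : (q : ℝ) + 1 < dist ξ (cC q (j - 1)) :=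
        hCmem q (j - 1) (by rw [hL1] at hj; omega)
      linarith
    · rw [show (4 * q + 2) / 4 = q by omega, hB2]
      exact (hQ q (a q + j) (le_trans (haQ q) (by omega))).2
    · rw [show (4 * q + 3) / 4 = q by omega, hB3]
      have hmem : (q : ℝ) + 1 < dist ξ (cD q (j - 1)) :=
        hDmem q (j - 1) (by rw [hL3] at hj; omega)
      linarith
  -- the glued sequence is coarse
  have hU : IsCoarseSeqM ξ (glueSeq Bf L) := by
    constructor
    · exact ⟨KU, glueSeq_step hL hjunc hstepB⟩
    · rw [Filter.tendsto_atTop]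
      intro b
      obtain ⟨M, hM⟩ := exists_nat_ge b
      filter_upwards [Filter.eventually_ge_atTop (cumLen L (4 * M))] with i hi
      obtain ⟨m, hMm, j, hj, hval⟩ := glueSeq_tail (B := Bf) hL hi
      rw [hval]
      have h1 := hlow m j hj
      have h2 : M ≤ m / 4 := by omega
      have h3 : (M : ℝ) ≤ ((m / 4 : ℕ) : ℝ) := by exact_mod_cast h2
      linarith
  -- the subsequence positions
  set mi : ℕ → ℕ := fun i => Nat.findGreatest (fun m => a m ≤ a 0 + i) (a 0 + i) with hmidef
  have hmi1 : ∀ i, a (mi i) ≤ a 0 + i := fun i =>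
    Nat.findGreatest_spec (P := fun m => a m ≤ a 0 + i) (Nat.zero_le _) (by omega)
  have hmi2 : ∀ i, a 0 + i < a (mi i + 1) := by
    intro i
    by_cases h : mi i + 1 ≤ a 0 + i
    · by_contra hcon
      push_neg at hcon
      have hgt : mi i + 1 ≤ mi i :=
        Nat.le_findGreatest (P := fun m => a m ≤ a 0 + i) h hcon
      omega
    · push_neg at h
      have h2 : mi i + 1 ≤ a (mi i + 1) := ha_mono.le_apply
      omega
  have hmi_mono : ∀ i i', i ≤ i' → mi i ≤ mi i' := by
    intro i i' h
    apply Nat.le_findGreatest (P := fun m => a m ≤ a 0 + i')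
    · exact le_trans (le_trans ha_mono.le_apply (hmi1 i)) (by omega)
    · exact le_trans (hmi1 i) (by omega)
  -- s shifted is a subsequence of the glued sequence
  have hsubsU : IsSubseq (fun i => s (a 0 + i)) (glueSeq Bf L) := by
    refine ⟨fun i => cumLen L (4 * mi i) + (a 0 + i - a (mi i)), ?_, ?_⟩
    · intro i i' hii
      have h1 := hmi1 i; have h2 := hmi2 i
      have h1' := hmi1 i'; have h2' := hmi2 i'
      show cumLen L (4 * mi i) + (a 0 + i - a (mi i))
        < cumLen L (4 * mi i') + (a 0 + i' - a (mi i'))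
      rcases Nat.lt_or_ge (mi i) (mi i') with hlt | hge
      · have hb : a 0 + i - a (mi i) < L (4 * mi i) := by
          rw [hL0 (mi i)]; omega
        have hc : cumLen L (4 * mi i + 1) = cumLen L (4 * mi i) + L (4 * mi i) := rfl
        have hd : cumLen L (4 * mi i + 1) ≤ cumLen L (4 * mi i') := cumLen_mono L (by omega)
        omega
      · have heq : mi i = mi i' := le_antisymm (hmi_mono i i' (le_of_lt hii)) hge
        rw [heq] at h1 h2 ⊢
        omega
    · intro i
      have h1 := hmi1 i; have h2 := hmi2 i
      have hb : a 0 + i - a (mi i) < L (4 * mi i) := by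
        rw [hL0 (mi i)]; omega
      rw [glueSeq_eval hL hb, hB0]
      exact congrArg s (Nat.add_sub_cancel' h1).symm
  -- t shifted is a subsequence of the glued sequence
  have hsubtU : IsSubseq (fun i => t (a 0 + i)) (glueSeq Bf L) := by
    refine ⟨fun i => cumLen L (4 * mi i + 2) + (a 0 + i - a (mi i)), ?_, ?_⟩
    · intro i i' hii
      have h1 := hmi1 i; have h2 := hmi2 i
      have h1' := hmi1 i'; have h2' := hmi2 i'
      show cumLen L (4 * mi i + 2) + (a 0 + i - a (mi i))
        < cumLen L (4 * mi i' + 2) + (a 0 + i' - a (mi i'))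
      rcases Nat.lt_or_ge (mi i) (mi i') with hlt | hge
      · have hb : a 0 + i - a (mi i) < L (4 * mi i + 2) := by
          rw [hL2 (mi i)]; omega
        have hc : cumLen L (4 * mi i + 3) = cumLen L (4 * mi i + 2) + L (4 * mi i + 2) := rfl
        have hd : cumLen L (4 * mi i + 3) ≤ cumLen L (4 * mi i' + 2) := cumLen_mono L (by omega)
        omega
      · have heq : mi i = mi i' := le_antisymm (hmi_mono i i' (le_of_lt hii)) hge
        rw [heq] at h1 h2 ⊢
        omega
    · intro i
      have h1 := hmi1 i; have h2 := hmi2 i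
      have hb : a 0 + i - a (mi i) < L (4 * mi i + 2) := by
        rw [hL2 (mi i)]; omega
      rw [glueSeq_eval hL hb, hB2]
      exact congrArg t (Nat.add_sub_cancel' h1).symm
  -- assemble the σ-chain
  refine ⟨4, fun n => if n = 0 then s else if n = 1 then (fun i => s (a 0 + i))
    else if n = 2 then glueSeq Bf L else if n = 3 then (fun i => t (a 0 + i)) else t,
    rfl, rfl, ?_, ?_⟩
  · intro i hi
    interval_cases i
    · exact hs
    · exact shift_coarse hs (a 0)
    · exact hU
    · exact shift_coarse ht (a 0)
    · exact ht
  · intro i hi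
    interval_cases i
    · exact Or.inr (isSubseq_shift s (a 0))
    · exact Or.inl hsubsU
    · exact Or.inr hsubtU
    · exact Or.inl (isSubseq_shift t (a 0))


/-! ### From paths to chains -/

lemma chainM_of_joinedIn {ξ : X} {R : ℝ} {x y : X}
    (h : JoinedIn {z | R < dist ξ z} x y) : ChainM 1 {z | R < dist ξ z} x y := by
  obtain ⟨p, hp⟩ := h
  have huc : UniformContinuous (p : unitInterval → X) :=
    CompactSpace.uniformContinuous_of_continuous p.continuous
  rw [Metric.uniformContinuous_iff] at huc
  obtain ⟨δ, hδ, hspec⟩ := huc 1 one_pos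
  obtain ⟨n, hn⟩ := exists_nat_gt (1 / δ)
  have hn0 : 0 < n := by
    by_contra hcon
    push_neg at hcon
    interval_cases n
    have : 0 < 1 / δ := by positivity
    linarith
  refine ⟨n, fun j => p (Set.projIcc 0 1 zero_le_one ((j : ℝ) / n)), ?_, ?_, ?_, ?_⟩
  · show p (Set.projIcc 0 1 zero_le_one (((0 : ℕ) : ℝ) / n)) = x
    have h0 : ((0 : ℕ) : ℝ) / n = 0 := by norm_num
    rw [h0, Set.projIcc_left]
    exact p.source
  · show p (Set.projIcc 0 1 zero_le_one (((n : ℕ) : ℝ) / n)) = y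
    have h1 : ((n : ℕ) : ℝ) / n = 1 := by
      have : (n:ℝ) ≠ 0 := by positivity
      field_simp
    rw [h1, Set.projIcc_right]
    exact p.target
  · intro j _
    exact hp _
  · intro j hj
    apply le_of_lt
    apply hspec
    have hj1 : ((j : ℝ) / n) ∈ Set.Icc (0:ℝ) 1 := by
      constructor
      · positivity
      · rw [div_le_one (by exact_mod_cast hn0)]
        exact_mod_cast le_of_lt hj
    have hj2 : (((j + 1 : ℕ) : ℝ) / n) ∈ Set.Icc (0:ℝ) 1 := by
      constructor
      · positivity
      · rw [div_le_one (by exact_mod_cast hn0)]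
        exact_mod_cast hj
    rw [Subtype.dist_eq, Set.projIcc_of_mem zero_le_one hj1, Set.projIcc_of_mem zero_le_one hj2]
    rw [Real.dist_eq]
    have he : |(j : ℝ) / n - ((j + 1 : ℕ) : ℝ) / n| = 1 / n := by
      push_cast
      rw [abs_of_nonpos (by
        have hnn : (0:ℝ) < n := by exact_mod_cast hn0
        rw [div_sub_div_same]
        apply div_nonpos_of_nonpos_of_nonneg <;> linarith)]
      field_simp
      ring
    rw [he]
    calc (1 : ℝ) / n < δ := by
          rw [div_lt_iff₀ (by exact_mod_cast hn0)]
          rw [div_lt_iff₀ hδ] at hn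
          linarith
      _ ≤ δ := le_refl δ

/-! ### SameEnd gives ε-equivalence of the sampled sequences -/

lemma epsRel_seqOfRay_of_sameEnd
    (hproper : ∀ B : Set X, IsClosed B → Bornology.IsBounded B → IsCompact B)
    (ξ : X) {r₀ r₁ : ℝ≥0 → X} (hse : SameEnd r₀ r₁) :
    EpsRelM ξ (seqOfRay r₀) (seqOfRay r₁) := by
  refine ⟨1, one_pos, ?_⟩
  intro R hR
  have hcpt : IsCompact (Metric.closedBall ξ R) :=
    hproper _ Metric.isClosed_closedBall Metric.isBounded_closedBall
  obtain ⟨N, hN⟩ := hse _ hcpt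
  obtain ⟨N₀, hN₀⟩ := Filter.eventually_atTop.mp
    ((phiSamp_tendsto (rReal r₀)).eventually_ge_atTop (N : ℝ))
  obtain ⟨N₁, hN₁⟩ := Filter.eventually_atTop.mp
    ((phiSamp_tendsto (rReal r₁)).eventually_ge_atTop (N : ℝ))
  refine ⟨max N₀ N₁, ?_⟩
  have hmap : ∀ x, x ∈ (seqOfRay r₀ '' {i | max N₀ N₁ ≤ i}) ∪
      (seqOfRay r₁ '' {i | max N₀ N₁ ≤ i}) →
      x ∈ (r₀ '' {u : ℝ≥0 | ((N : ℕ) : ℝ≥0) ≤ u}) ∪ (r₁ '' {u : ℝ≥0 | ((N : ℕ) : ℝ≥0) ≤ u}) := by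
    rintro x (⟨i, hi, rfl⟩ | ⟨i, hi, rfl⟩)
    · left
      refine ⟨Real.toNNReal (phiSamp (rReal r₀) i), ?_, rfl⟩
      simp only [Set.mem_setOf_eq]
      have h1 : (N : ℝ) ≤ phiSamp (rReal r₀) i := hN₀ i (le_trans (le_max_left _ _) hi)
      calc ((N : ℕ) : ℝ≥0) = Real.toNNReal (N : ℝ) := by
            rw [Real.toNNReal_natCast]
        _ ≤ _ := Real.toNNReal_mono h1
    · right
      refine ⟨Real.toNNReal (phiSamp (rReal r₁) i), ?_, rfl⟩
      simp only [Set.mem_setOf_eq]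
      have h1 : (N : ℝ) ≤ phiSamp (rReal r₁) i := hN₁ i (le_trans (le_max_right _ _) hi)
      calc ((N : ℕ) : ℝ≥0) = Real.toNNReal (N : ℝ) := by
            rw [Real.toNNReal_natCast]
        _ ≤ _ := Real.toNNReal_mono h1
  intro x hx y hy
  have hj : JoinedIn (Metric.closedBall ξ R)ᶜ x y := hN x (hmap x hx) y (hmap y hy)
  have hsub : (Metric.closedBall ξ R)ᶜ ⊆ {z | R < dist ξ z} := by
    intro z hz
    simp only [Set.mem_compl_iff, Metric.mem_closedBall, not_le] at hz
    rw [Set.mem_setOf_eq, dist_comm]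
    exact hz
  exact chainM_of_joinedIn (hj.mono hsub)

/-! ### σ-equivalence gives rays with the same end -/

lemma sameEnd_rayOf_of_sigmaRel (hgeo : IsGeodesicSpace X) {ξ : X} {s t : ℕ → X}
    (h : SigmaRelM ξ s t) : SameEnd (rayOf hgeo s) (rayOf hgeo t) := by
  obtain ⟨n, u, h0, hn, hcoarse, hrel⟩ := h
  have key : ∀ i, i ≤ n → SameEnd (rayOf hgeo (u 0)) (rayOf hgeo (u i)) := by
    intro i
    induction i with
    | zero =>
      intro _
      exact sameEnd_rayOf_of_subseq hgeo ξ (hcoarse 0 (Nat.zero_le n)) (hcoarse 0 (Nat.zero_le n))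
        ⟨id, strictMono_id, fun i => rfl⟩
    | succ i ih =>
      intro hi
      have hse := ih (by omega)
      rcases hrel i (by omega) with hsub | hsub
      · exact sameEnd_trans hse (sameEnd_rayOf_of_subseq hgeo ξ (hcoarse i (by omega))
          (hcoarse (i + 1) hi) hsub)
      · exact sameEnd_trans hse (sameEnd_symm (sameEnd_rayOf_of_subseq hgeo ξ
          (hcoarse (i + 1) hi) (hcoarse i (by omega)) hsub))
  have := key n (le_refl n)
  rw [h0, hn] at this
  exact this

end Aux

/-- for a proper geodesic pointed metric space `(X, ξ)`, there is a
bijection between `Ends X` and `σ(X, ξ)`. -/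
theorem ends_equiv_sigmaQuot {X : Type*} [MetricSpace X]
    (hproper : ∀ B : Set X, IsClosed B → Bornology.IsBounded B → IsCompact B)
    (hgeo : IsGeodesicSpace X) (ξ : X) :
    Nonempty (Ends X ≃ SigmaQuotM ξ) := by
  refine ⟨?_⟩
  refine
    { toFun := Quot.lift
        (fun r : {r : ℝ≥0 → X // IsRay r} =>
          Quot.mk _ (⟨seqOfRay r.1, seqOfRay_coarse hproper ξ r.2⟩ : CoarseSeqM ξ))
        ?_,
      invFun := Quot.lift
        (fun s : CoarseSeqM ξ =>
          Quot.mk _ (⟨rayOf hgeo s.1, rayOf_isRay hgeo s.2⟩ : {r : ℝ≥0 → X // IsRay r}))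
        ?_,
      left_inv := ?_, right_inv := ?_ }
  · intro r₀ r₁ h
    exact Quot.sound (sigmaRel_of_epsRel (seqOfRay_coarse hproper ξ r₀.2)
      (seqOfRay_coarse hproper ξ r₁.2) (epsRel_seqOfRay_of_sameEnd hproper ξ h))
  · intro s t h
    exact Quot.sound (sameEnd_rayOf_of_sigmaRel hgeo h)
  · intro e
    induction e using Quot.ind with
    | _ r =>
      apply Quot.sound
      exact sameEnd_symm (sameEnd_ray_rayOf_seqOfRay hproper hgeo ξ r.2)
  · intro q
    induction q using Quot.ind with
    | _ s =>
      apply Quot.sound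
      refine ⟨1, fun n => if n = 0 then seqOfRay (rayOf hgeo s.1) else s.1, rfl, rfl, ?_, ?_⟩
      · intro i hi
        interval_cases i
        · exact seqOfRay_coarse hproper ξ (rayOf_isRay hgeo s.2)
        · exact s.2
      · intro i hi
        interval_cases i
        exact Or.inr (isSubseq_seqOfRay_rayOf hgeo s.1)
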